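/- Let Λ_0 be an m×r PLT matrix, i.e., an ordered GLT matrix whose pivot rows are l_j = j for j = 1, …, r, and let P be an r×r orthogonal matrix. Then the unique ordered GLT representation of β = Λ_0 P equals Λ_0; i.e., whenever a PLT representation of β exists, the GLT representation automatically reduces to it. -/

import Mathlib

open Matrix

/-- `Λ` is an ordered GLT matrix with pivot rows `l 0 < ... < l (r-1)`. -/
def IsOrderedGLTWithPivots {m r : ℕ} (Λ : Matrix (Fin m) (Fin r) ℝ) (l : Fin r → Fin m) : Prop :=
  Λ.rank = r ∧ StrictMono l ∧
    ∀ j : Fin r, (∀ i : Fin m, i < l j → Λ i j = 0) ∧ 0 < Λ (l j) j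

/-- `Λ` is an ordered GLT matrix. -/
def IsOrderedGLT {m r : ℕ} (Λ : Matrix (Fin m) (Fin r) ℝ) : Prop :=
  ∃ l : Fin r → Fin m, IsOrderedGLTWithPivots Λ l

lemma ortho_lt_posdiag_eq_one {r : ℕ} (Q : Matrix (Fin r) (Fin r) ℝ)
    (hQ : Q * Qᵀ = 1) (hlt : ∀ i j : Fin r, i < j → Q i j = 0)
    (hd : ∀ j : Fin r, 0 < Q j j) : Q = 1 := by
  suffices h : ∀ i k : Fin r, Q i k = if i = k then 1 else 0 by
    ext i k; rw [h i k, Matrix.one_apply]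
  suffices h : ∀ n : ℕ, ∀ i : Fin r, (i : ℕ) < n → ∀ k : Fin r, Q i k = if i = k then 1 else 0 by
    intro i k; exact h (r + 1) i (by omega) k
  intro n
  induction n with
  | zero => intro i hi; omega
  | succ n IH =>
    intro i hi
    have hrow : ∀ k : Fin r, k < i → ∀ t, Q k t = if k = t then 1 else 0 := by
      intro k hk t
      exact IH k (by omega) t
    intro k
    rcases lt_trichotomy i k with h | h | h
    · rw [if_neg h.ne, hlt i k h]
    · subst h
      rw [if_pos rfl]
      have h1 : (Q * Qᵀ) i i = 1 := by rw [hQ, Matrix.one_apply_eq]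
      rw [Matrix.mul_apply] at h1
      have hsum : ∑ t, Q i t * Qᵀ t i = Q i i * Q i i := by
        apply Finset.sum_eq_single i
        · intro t _ ht
          rcases lt_or_gt_of_ne ht with h2 | h2
          · have h3 : (Q * Qᵀ) i t = 0 := by
              rw [hQ, Matrix.one_apply_ne (by exact fun he => (ne_of_lt h2).symm he)]
            rw [Matrix.mul_apply] at h3
            have : ∑ u, Q i u * Qᵀ u t = Q i t := by
              rw [Finset.sum_eq_single t]
              · rw [Matrix.transpose_apply, hrow t h2 t, if_pos rfl, mul_one]
              · intro u _ hu
                rw [Matrix.transpose_apply, hrow t h2 u, if_neg (fun he => hu he.symm), mul_zero]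
              · intro hm; exact absurd (Finset.mem_univ t) hm
            rw [this] at h3
            rw [Matrix.transpose_apply, h3, zero_mul]
          · rw [hlt i t h2, zero_mul]
        · intro hm; exact absurd (Finset.mem_univ i) hm
      rw [hsum] at h1
      have := hd i
      nlinarith
    · rw [if_neg (ne_of_gt h)]
      have h3 : (Q * Qᵀ) i k = 0 := by rw [hQ, Matrix.one_apply_ne (ne_of_gt h)]
      rw [Matrix.mul_apply] at h3
      have : ∑ u, Q i u * Qᵀ u k = Q i k := by
        rw [Finset.sum_eq_single k]
        · rw [Matrix.transpose_apply, hrow k h k, if_pos rfl, mul_one]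
        · intro u _ hu
          rw [Matrix.transpose_apply, hrow k h u, if_neg (fun he => hu he.symm), mul_zero]
        · intro hm; exact absurd (Finset.mem_univ k) hm
      rw [this] at h3
      exact h3

/-- If `Λ₀` is a PLT matrix (ordered GLT with pivot rows `l j = j`) and `P` is
orthogonal, then the unique ordered GLT representation of `β = Λ₀ P` is `Λ₀`
itself: any ordered GLT matrix of the form `Λ₀ * P * G` with `G` orthogonal
equals `Λ₀`. -/
theorem glt_representation_of_PLT {m r : ℕ} (hrm : r ≤ m)
    (Λ₀ : Matrix (Fin m) (Fin r) ℝ)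
    (hPLT : IsOrderedGLTWithPivots Λ₀ (Fin.castLE hrm))
    (P : Matrix (Fin r) (Fin r) ℝ) (hP : P * Pᵀ = 1) :
    ∀ G : Matrix (Fin r) (Fin r) ℝ, G * Gᵀ = 1 →
      IsOrderedGLT (Λ₀ * P * G) → Λ₀ * P * G = Λ₀ := by
  intro G hG hGLT
  set Q := P * G with hQdef
  have hassoc : Λ₀ * P * G = Λ₀ * Q := by rw [hQdef, Matrix.mul_assoc]
  have hQ : Q * Qᵀ = 1 := by
    rw [hQdef, Matrix.transpose_mul, Matrix.mul_assoc, ← Matrix.mul_assoc G, hG,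
      Matrix.one_mul, hP]
  have hQ' : Qᵀ * Q = 1 := mul_eq_one_comm.mp hQ
  obtain ⟨_, _, hΛ₀⟩ := hPLT
  obtain ⟨l, hΛrank, hlmono, hΛ⟩ := hGLT
  rw [hassoc] at hΛ ⊢
  -- columns of Q are nonzero
  have hcol : ∀ j : Fin r, ∃ k : Fin r, Q k j ≠ 0 := by
    intro j
    by_contra hc
    push_neg at hc
    have h1 : (Qᵀ * Q) j j = 1 := by rw [hQ', Matrix.one_apply_eq]
    rw [Matrix.mul_apply] at h1
    have : ∑ k, Qᵀ j k * Q k j = 0 := by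
      apply Finset.sum_eq_zero
      intro k _
      rw [hc k, mul_zero]
    rw [this] at h1
    exact one_ne_zero h1.symm
  -- minimal support index of column j of Q
  have hTne : ∀ j : Fin r, (Finset.univ.filter (fun k => Q k j ≠ 0)).Nonempty := by
    intro j
    obtain ⟨k, hk⟩ := hcol j
    exact ⟨k, Finset.mem_filter.mpr ⟨Finset.mem_univ k, hk⟩⟩
  set s : Fin r → Fin r := fun j => (Finset.univ.filter (fun k => Q k j ≠ 0)).min' (hTne j)
    with hsdef
  have hs_ne : ∀ j, Q (s j) j ≠ 0 := by
    intro j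
    have := (Finset.univ.filter (fun k => Q k j ≠ 0)).min'_mem (hTne j)
    exact (Finset.mem_filter.mp this).2
  have hs_min : ∀ j, ∀ k : Fin r, k < s j → Q k j = 0 := by
    intro j k hk
    by_contra hc
    have : s j ≤ k := Finset.min'_le _ k (Finset.mem_filter.mpr ⟨Finset.mem_univ k, hc⟩)
    exact absurd hk (not_lt.mpr this)
  -- entries of Λ₀ * Q below the pivot vanish
  have hzero : ∀ j : Fin r, ∀ i : Fin m, i < Fin.castLE hrm (s j) → (Λ₀ * Q) i j = 0 := by
    intro j i hi
    rw [Matrix.mul_apply]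
    apply Finset.sum_eq_zero
    intro k _
    rcases lt_or_ge k (s j) with h | h
    · rw [hs_min j k h, mul_zero]
    · have : i < Fin.castLE hrm k := lt_of_lt_of_le hi (by simpa using h)
      rw [(hΛ₀ k).1 i this, zero_mul]
  -- pivot entry of column j
  have hpiv : ∀ j : Fin r,
      (Λ₀ * Q) (Fin.castLE hrm (s j)) j = Λ₀ (Fin.castLE hrm (s j)) (s j) * Q (s j) j := by
    intro j
    rw [Matrix.mul_apply]
    apply Finset.sum_eq_single (s j)
    · intro k _ hk
      rcases lt_or_gt_of_ne hk with h | h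
      · rw [hs_min j k h, mul_zero]
      · have : Fin.castLE hrm (s j) < Fin.castLE hrm k := by simpa using h
        rw [(hΛ₀ k).1 _ this, zero_mul]
    · intro hm; exact absurd (Finset.mem_univ (s j)) hm
  have hpiv_ne : ∀ j : Fin r, (Λ₀ * Q) (Fin.castLE hrm (s j)) j ≠ 0 := by
    intro j
    rw [hpiv j]
    exact mul_ne_zero (ne_of_gt (hΛ₀ (s j)).2) (hs_ne j)
  -- l j = castLE (s j)
  have hl : ∀ j : Fin r, l j = Fin.castLE hrm (s j) := by
    intro j
    rcases lt_trichotomy (l j) (Fin.castLE hrm (s j)) with h | h | h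
    · exact absurd (hzero j (l j) h) (ne_of_gt (hΛ j).2)
    · exact h
    · exact absurd ((hΛ j).1 _ h) (hpiv_ne j)
  -- s is strictly monotone, hence the identity
  have hsmono : StrictMono s := by
    intro a b hab
    have := hlmono hab
    rw [hl a, hl b] at this
    simpa using this
  have hsid : s = id := by
    apply (StrictMono.range_inj hsmono strictMono_id).mp
    rw [Set.range_id]
    exact Set.range_eq_univ.mpr (Finite.surjective_of_injective hsmono.injective)
  -- Q is lower triangular with positive diagonal
  have hQlt : ∀ i j : Fin r, i < j → Q i j = 0 := by
    intro i j hij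
    apply hs_min j
    rw [show s j = j from congrFun hsid j]
    exact hij
  have hQd : ∀ j : Fin r, 0 < Q j j := by
    intro j
    have h2 := (hΛ j).2
    rw [hl j, hpiv j] at h2
    have h3 := (hΛ₀ (s j)).2
    have h4 : 0 < Q (s j) j := by nlinarith
    rwa [show s j = j from congrFun hsid j] at h4
  have : Q = 1 := ortho_lt_posdiag_eq_one Q hQ hQlt hQd
  rw [this, Matrix.mul_one]
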